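/- arXiv:2206.08012 — 6 statements merged into one kernel-verified Lean document; each statement's English description precedes it below -/
import Mathlib

section
/- If the multi-index 𝐦 ∈ ℕ₀^{2N} satisfies ‖𝐦‖ > M, then 𝐦 ∈ 𝐈, i.e. there exists 𝐧 ∈ 𝐑_min with 𝐧 ≺ 𝐦. -/
open scoped BigOperators

/-- The dot product 𝐦·λ = Σⱼ (m₊ⱼ − m₋ⱼ)λⱼ of a multi-index with
    λ = (λ₁,…,λ_N,−λ₁,…,−λ_N). -/
def mdot {N : ℕ} (lam : Fin N → ℝ) (m : (Fin N → ℕ) × (Fin N → ℕ)) : ℝ :=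
  ∑ j, ((m.1 j : ℝ) - (m.2 j : ℝ)) * lam j

/-- The norm ‖𝐦‖ = Σⱼ (m₊ⱼ + m₋ⱼ). -/
def mnorm {N : ℕ} (m : (Fin N → ℕ) × (Fin N → ℕ)) : ℕ :=
  ∑ j, (m.1 j + m.2 j)

/-- The relation 𝐧 ≺ 𝐦. -/
def prec {N : ℕ} (n m : (Fin N → ℕ) × (Fin N → ℕ)) : Prop :=
  (∀ j, n.1 j + n.2 j ≤ m.1 j + m.2 j) ∧ mnorm n < mnorm m

/-- The resonant set 𝐑 = {𝐦 : |𝐦·λ| > m}. -/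
def Rset {N : ℕ} (lam : Fin N → ℝ) (mass : ℝ) : Set ((Fin N → ℕ) × (Fin N → ℕ)) :=
  {m | |mdot lam m| > mass}

/-- The minimal resonant set 𝐑_min. -/
def Rmin {N : ℕ} (lam : Fin N → ℝ) (mass : ℝ) : Set ((Fin N → ℕ) × (Fin N → ℕ)) :=
  {m | m ∈ Rset lam mass ∧ ∀ n ∈ Rset lam mass, ¬ prec n m}

/-- Given a pointwise bound `c` with total sum `M + k`, one can find a
pointwise-smaller function summing exactly to `M`. -/
lemma exists_sub_sum {N : ℕ} (M : ℕ) :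
    ∀ (k : ℕ) (c : Fin N → ℕ), ∑ j, c j = M + k →
    ∃ d : Fin N → ℕ, (∀ j, d j ≤ c j) ∧ ∑ j, d j = M := by
  intro k
  induction k with
  | zero => intro c hc; exact ⟨c, fun j => le_rfl, by simpa using hc⟩
  | succ k ih =>
    intro c hc
    obtain ⟨j, hj⟩ : ∃ j, 0 < c j := by
      by_contra h
      push_neg at h
      simp only [Nat.le_zero] at h
      have : ∑ j, c j = 0 := Finset.sum_eq_zero fun j _ => h j
      omega
    set c' := Function.update c j (c j - 1) with hc'
    have hle : ∀ i, c' i ≤ c i := by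
      intro i
      by_cases hij : i = j
      · subst hij; simp [hc']
      · simp [hc', Function.update_of_ne hij]
    have h1 : ∑ i, c i = c j + ∑ i ∈ Finset.univ.erase j, c i :=
      (Finset.add_sum_erase _ _ (Finset.mem_univ j)).symm
    have h2 : ∑ i, c' i = c' j + ∑ i ∈ Finset.univ.erase j, c' i :=
      (Finset.add_sum_erase _ _ (Finset.mem_univ j)).symm
    have h3 : ∑ i ∈ Finset.univ.erase j, c' i = ∑ i ∈ Finset.univ.erase j, c i := by
      apply Finset.sum_congr rfl
      intro i hi
      simp [hc', Function.update_of_ne (Finset.ne_of_mem_erase hi)]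
    have hcj : c' j = c j - 1 := by simp [hc']
    have hsum : ∑ i, c' i = M + k := by omega
    obtain ⟨d, hd1, hd2⟩ := ih c' hsum
    exact ⟨d, fun i => le_trans (hd1 i) (hle i), hd2⟩

/-- Descent: from any resonant `x ≺ m` we reach a minimal resonant `n ≺ m`. -/
lemma descend {N : ℕ} (lam : Fin N → ℝ) (mass : ℝ) (m : (Fin N → ℕ) × (Fin N → ℕ)) :
    ∀ (k : ℕ) (x : (Fin N → ℕ) × (Fin N → ℕ)), mnorm x ≤ k → x ∈ Rset lam mass →
      prec x m → ∃ n ∈ Rmin lam mass, prec n m := by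
  intro k
  induction k with
  | zero =>
    intro x hk hx hpx
    by_cases hmin : ∀ y ∈ Rset lam mass, ¬ prec y x
    · exact ⟨x, ⟨hx, hmin⟩, hpx⟩
    · push_neg at hmin
      obtain ⟨y, hy, hpy⟩ := hmin
      have := hpy.2
      omega
  | succ k ih =>
    intro x hk hx hpx
    by_cases hmin : ∀ y ∈ Rset lam mass, ¬ prec y x
    · exact ⟨x, ⟨hx, hmin⟩, hpx⟩
    · push_neg at hmin
      obtain ⟨y, hy, hpy⟩ := hmin
      have hpym : prec y m :=
        ⟨fun j => le_trans (hpy.1 j) (hpx.1 j), lt_trans hpy.2 hpx.2⟩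
      have : mnorm y ≤ k := by have := hpy.2; omega
      exact ih y this hy hpym

/-- If ‖𝐦‖ > M then 𝐦 ∈ 𝐈, i.e. there exists 𝐧 ∈ 𝐑_min with 𝐧 ≺ 𝐦. -/
theorem mnorm_gt_M_mem_I {N : ℕ} (hN : 0 < N) (lam : Fin N → ℝ) (mass : ℝ)
    (hmass : 0 < mass)
    (hpos : ∀ j, 0 < lam j)
    (hmono : StrictMono lam)
    (hlt : ∀ j, lam j < mass)
    (M : ℕ)
    (hM1 : ((M : ℝ) - 1) * lam ⟨0, hN⟩ < mass)
    (hM2 : mass ≤ (M : ℝ) * lam ⟨0, hN⟩)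
    (hgen : ∀ m : (Fin N → ℕ) × (Fin N → ℕ), mnorm m ≤ M → (mdot lam m) ^ 2 ≠ mass ^ 2)
    (m : (Fin N → ℕ) × (Fin N → ℕ)) (hm : mnorm m > M) :
    ∃ n ∈ Rmin lam mass, prec n m := by
  set c : Fin N → ℕ := fun j => m.1 j + m.2 j with hc
  have hsum : ∑ j, c j = M + (mnorm m - M) := by
    have : ∑ j, c j = mnorm m := rfl
    omega
  obtain ⟨d, hd1, hd2⟩ := exists_sub_sum M (mnorm m - M) c hsum
  set x : (Fin N → ℕ) × (Fin N → ℕ) := (d, fun _ => 0) with hx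
  have hxnorm : mnorm x = M := by
    simp only [mnorm, hx]
    simpa using hd2
  have hxprec : prec x m := by
    refine ⟨fun j => ?_, ?_⟩
    · simpa [hx] using hd1 j
    · omega
  have hdot : mdot lam x = ∑ j, (d j : ℝ) * lam j := by
    simp [mdot, hx]
  have hge : (M : ℝ) * lam ⟨0, hN⟩ ≤ mdot lam x := by
    rw [hdot]
    have hM : (M : ℝ) = ∑ j, (d j : ℝ) := by
      rw [← Nat.cast_sum, hd2]
    rw [hM, Finset.sum_mul]
    apply Finset.sum_le_sum
    intro j _
    apply mul_le_mul_of_nonneg_left _ (Nat.cast_nonneg _)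
    exact hmono.monotone (by simp [Fin.le_def])
  have hgt : mass < mdot lam x := by
    have hne := hgen x (by omega)
    have hle : mass ≤ mdot lam x := le_trans hM2 hge
    rcases lt_or_eq_of_le hle with h | h
    · exact h
    · exact absurd (by rw [← h]) hne
  have hxR : x ∈ Rset lam mass := by
    simp only [Rset, Set.mem_setOf_eq]
    rw [abs_of_pos (lt_trans hmass hgt)]
    exact hgt
  exact descend lam mass m (mnorm x) x le_rfl hxR hxprec
end

section
/- If 𝐦 = (𝐦₊, 𝐦₋) ∈ 𝐑_min, then 𝐦₊ = 0 or 𝐦₋ = 0. -/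
open scoped BigOperators

lemma sum_update_split {N : ℕ} (g : Fin N → ℝ) (k : Fin N) (w : ℝ) :
    ∑ j, Function.update g k w j = w + ∑ j ∈ Finset.univ.erase k, g j := by
  rw [← Finset.add_sum_erase _ _ (Finset.mem_univ k)]
  congr 1
  · simp
  · exact Finset.sum_congr rfl fun j hj => Function.update_of_ne (Finset.ne_of_mem_erase hj) _ _

/-- If 𝐦 ∈ 𝐑_min then 𝐦₊ = 0 or 𝐦₋ = 0. -/
theorem Rmin_plus_or_minus_zero {N : ℕ} (hN : 0 < N) (lam : Fin N → ℝ) (mass : ℝ)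
    (hmass : 0 < mass)
    (hpos : ∀ j, 0 < lam j)
    (hmono : StrictMono lam)
    (hlt : ∀ j, lam j < mass)
    (m : (Fin N → ℕ) × (Fin N → ℕ)) (hm : m ∈ Rmin lam mass) :
    m.1 = 0 ∨ m.2 = 0 := by
  obtain ⟨hR, hmin⟩ := hm
  replace hR : mass < |mdot lam m| := hR
  by_cases h0 : 0 ≤ mdot lam m
  · -- mdot > mass, show m.2 = 0
    right
    rw [abs_of_nonneg h0] at hR
    funext k
    by_contra hk
    have hk1 : 1 ≤ m.2 k := Nat.one_le_iff_ne_zero.2 hk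
    set n : (Fin N → ℕ) × (Fin N → ℕ) := (m.1, Function.update m.2 k (m.2 k - 1)) with hn
    have hmdot : mdot lam n = mdot lam m + lam k := by
      have : (fun j => ((n.1 j : ℝ) - (n.2 j : ℝ)) * lam j)
          = Function.update (fun j => ((m.1 j : ℝ) - (m.2 j : ℝ)) * lam j) k
              (((m.1 k : ℝ) - ((m.2 k : ℝ) - 1)) * lam k) := by
        funext j
        by_cases hj : j = k
        · subst hj
          simp [hn, Nat.cast_sub hk1]
        · simp [hn, Function.update_of_ne hj]
      unfold mdot
      rw [this, sum_update_split,
        ← Finset.add_sum_erase _ _ (Finset.mem_univ k)]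
      ring
    refine hmin n ?_ ?_
    · show |mdot lam n| > mass
      rw [hmdot, abs_of_nonneg (by linarith [hpos k])]
      linarith [hpos k]
    · constructor
      · intro j
        by_cases hj : j = k
        · subst hj; simp only [hn, Function.update_self]; omega
        · simp [hn, Function.update_of_ne hj]
      · unfold mnorm
        apply Finset.sum_lt_sum
        · intro j _
          by_cases hj : j = k
          · subst hj; simp only [hn, Function.update_self]; omega
          · simp [hn, Function.update_of_ne hj]
        · exact ⟨k, Finset.mem_univ k, by simp only [hn, Function.update_self]; omega⟩
  · -- mdot < -mass, show m.1 = 0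
    left
    push_neg at h0
    rw [abs_of_neg h0] at hR
    funext k
    by_contra hk
    have hk1 : 1 ≤ m.1 k := Nat.one_le_iff_ne_zero.2 hk
    set n : (Fin N → ℕ) × (Fin N → ℕ) := (Function.update m.1 k (m.1 k - 1), m.2) with hn
    have hmdot : mdot lam n = mdot lam m - lam k := by
      have : (fun j => ((n.1 j : ℝ) - (n.2 j : ℝ)) * lam j)
          = Function.update (fun j => ((m.1 j : ℝ) - (m.2 j : ℝ)) * lam j) k
              ((((m.1 k : ℝ) - 1) - (m.2 k : ℝ)) * lam k) := by
        funext j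
        by_cases hj : j = k
        · subst hj
          simp [hn, Nat.cast_sub hk1]
        · simp [hn, Function.update_of_ne hj]
      unfold mdot
      rw [this, sum_update_split,
        ← Finset.add_sum_erase _ _ (Finset.mem_univ k)]
      ring
    refine hmin n ?_ ?_
    · show |mdot lam n| > mass
      have : mdot lam n < 0 := by
        rw [hmdot]; linarith [hpos k]
      rw [abs_of_neg this, hmdot]
      linarith [hpos k]
    · constructor
      · intro j
        by_cases hj : j = k
        · subst hj; simp only [hn, Function.update_self]; omega
        · simp [hn, Function.update_of_ne hj]
      · unfold mnorm
        apply Finset.sum_lt_sum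
        · intro j _
          by_cases hj : j = k
          · subst hj; simp only [hn, Function.update_self]; omega
          · simp [hn, Function.update_of_ne hj]
        · exact ⟨k, Finset.mem_univ k, by simp only [hn, Function.update_self]; omega⟩
end

section
/- If 𝐦 ∈ Λ_j for some j ∈ {1,…,N}, then there exists a multi-index 𝐧 ∈ 𝐍𝐑 with 𝐧·λ = 0 and 𝐦 = e^j + 𝐧 (so that 𝐧 ∈ Λ₀ ∪ {𝟎}). -/
open scoped BigOperators

/-- The set 𝐈 = {𝐦 : ∃ 𝐧 ∈ 𝐑_min, 𝐧 ≺ 𝐦}. -/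
def Iset {N : ℕ} (lam : Fin N → ℝ) (mass : ℝ) : Set ((Fin N → ℕ) × (Fin N → ℕ)) :=
  {m | ∃ n ∈ Rmin lam mass, prec n m}

/-- The non-resonant set 𝐍𝐑 = ℕ₀^{2N} ∖ (𝐑_min ∪ 𝐈). -/
def NRset {N : ℕ} (lam : Fin N → ℝ) (mass : ℝ) : Set ((Fin N → ℕ) × (Fin N → ℕ)) :=
  (Rmin lam mass ∪ Iset lam mass)ᶜ

/-- The elementary multi-index e^j. -/
def eIdx {N : ℕ} (j : Fin N) : (Fin N → ℕ) × (Fin N → ℕ) :=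
  (fun k => if k = j then 1 else 0, fun _ => 0)

lemma prec_trans' {N : ℕ} {a b c : (Fin N → ℕ) × (Fin N → ℕ)} (h1 : prec a b) (h2 : prec b c) :
    prec a c :=
  ⟨fun j => le_trans (h1.1 j) (h2.1 j), lt_trans h1.2 h2.2⟩

lemma exists_le_sum_eq {N : ℕ} (M : ℕ) (g : Fin N → ℕ) (h : M ≤ ∑ k, g k) :
    ∃ f : Fin N → ℕ, (∀ k, f k ≤ g k) ∧ ∑ k, f k = M := by
  induction M with
  | zero => exact ⟨0, fun k => Nat.zero_le _, by simp⟩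
  | succ M ih =>
    obtain ⟨f, hf, hsum⟩ := ih (Nat.le_of_succ_le h)
    have hex : ∃ k, f k < g k := by
      by_contra hc
      push_neg at hc
      have := Finset.sum_le_sum (fun k (_ : k ∈ Finset.univ) => hc k)
      omega
    obtain ⟨k, hk⟩ := hex
    refine ⟨Function.update f k (f k + 1), ?_, ?_⟩
    · intro i
      rcases eq_or_ne i k with rfl | hik
      · simpa using hk
      · simp [Function.update_of_ne hik, hf i]
    · rw [Finset.sum_update_of_mem (Finset.mem_univ k)]
      have := Finset.sum_erase_add Finset.univ f (Finset.mem_univ k)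
      simp only [Finset.sdiff_singleton_eq_erase] at *
      omega

lemma exists_rmin_le {N : ℕ} (lam : Fin N → ℝ) (mass : ℝ)
    (n : (Fin N → ℕ) × (Fin N → ℕ)) (hn : n ∈ Rset lam mass) :
    ∃ r ∈ Rmin lam mass, r = n ∨ prec r n := by
  generalize h : mnorm n = K
  induction K using Nat.strong_induction_on generalizing n with
  | _ K ih =>
    by_cases hmin : ∀ n' ∈ Rset lam mass, ¬ prec n' n
    · exact ⟨n, ⟨hn, hmin⟩, Or.inl rfl⟩
    · push_neg at hmin
      obtain ⟨n', hn', hp⟩ := hmin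
      obtain ⟨r, hr, hcase⟩ := ih (mnorm n') (h ▸ hp.2) n' hn' rfl
      refine ⟨r, hr, Or.inr ?_⟩
      rcases hcase with rfl | hpr
      · exact hp
      · exact prec_trans' hpr hp

lemma rset_of_sum_eq {N : ℕ} (hN : 0 < N) (lam : Fin N → ℝ) (mass : ℝ)
    (hpos : ∀ j, 0 < lam j) (hmono : StrictMono lam) (M : ℕ)
    (hM2 : mass ≤ (M : ℝ) * lam ⟨0, hN⟩)
    (f : Fin N → ℕ) (hf : ∑ k, f k = M) :
    mass ≤ ∑ k, (f k : ℝ) * lam k := by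
  have h1 : ∀ k : Fin N, (f k : ℝ) * lam ⟨0, hN⟩ ≤ (f k : ℝ) * lam k := by
    intro k
    have : lam ⟨0, hN⟩ ≤ lam k := hmono.monotone (Fin.le_def.2 (Nat.zero_le _))
    exact mul_le_mul_of_nonneg_left this (by positivity)
  calc mass ≤ (M : ℝ) * lam ⟨0, hN⟩ := hM2
    _ = ∑ k, (f k : ℝ) * lam ⟨0, hN⟩ := by
        rw [← Finset.sum_mul]; push_cast [← hf]; ring
    _ ≤ ∑ k, (f k : ℝ) * lam k := Finset.sum_le_sum (fun k _ => h1 k)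

lemma nr_bound {N : ℕ} (hN : 0 < N) (lam : Fin N → ℝ) (mass : ℝ) (hmass : 0 < mass)
    (hpos : ∀ j, 0 < lam j) (hmono : StrictMono lam) (M : ℕ)
    (hM2 : mass ≤ (M : ℝ) * lam ⟨0, hN⟩)
    (hgen : ∀ m : (Fin N → ℕ) × (Fin N → ℕ), mnorm m ≤ M → (mdot lam m) ^ 2 ≠ mass ^ 2)
    (m : (Fin N → ℕ) × (Fin N → ℕ)) (hm : m ∈ NRset lam mass) : mnorm m < 2 * M := by
  by_contra hc
  push_neg at hc
  have hM1 : 1 ≤ M := by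
    by_contra h0
    have : M = 0 := by omega
    subst this
    simp at hM2
    linarith
  have hsplit : mnorm m = ∑ k, m.1 k + ∑ k, m.2 k := by
    simp [mnorm, Finset.sum_add_distrib]
  have hcases : M ≤ ∑ k, m.1 k ∨ M ≤ ∑ k, m.2 k := by omega
  have key : ∃ r0 : (Fin N → ℕ) × (Fin N → ℕ), r0 ∈ Rset lam mass ∧ prec r0 m := by
    rcases hcases with hcase | hcase
    · obtain ⟨f, hfle, hfsum⟩ := exists_le_sum_eq M m.1 hcase
      refine ⟨(f, 0), ?_, ?_⟩
      · have hdot : mdot lam (f, 0) = ∑ k, (f k : ℝ) * lam k := by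
          simp [mdot]
        have hge := rset_of_sum_eq hN lam mass hpos hmono M hM2 f hfsum
        have hnorm : mnorm (f, (0 : Fin N → ℕ)) = M := by simp [mnorm, hfsum]
        have hne := hgen (f, 0) (le_of_eq hnorm)
        have hne' : mdot lam (f, 0) ≠ mass := by
          intro h; exact hne (by rw [h])
        have hgt : mass < mdot lam (f, 0) := by
          rw [hdot] at hne' ⊢
          exact lt_of_le_of_ne hge (Ne.symm hne')
        simpa [Rset, abs_of_pos (lt_trans hmass hgt)] using hgt
      · constructor
        · intro k; simpa using le_trans (hfle k) (Nat.le_add_right _ _)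
        · have : mnorm (f, (0 : Fin N → ℕ)) = M := by simp [mnorm, hfsum]
          omega
    · obtain ⟨f, hfle, hfsum⟩ := exists_le_sum_eq M m.2 hcase
      refine ⟨(0, f), ?_, ?_⟩
      · have hdot : mdot lam ((0 : Fin N → ℕ), f) = -∑ k, (f k : ℝ) * lam k := by
          simp [mdot, Finset.sum_neg_distrib]
        have hge := rset_of_sum_eq hN lam mass hpos hmono M hM2 f hfsum
        have hnorm : mnorm ((0 : Fin N → ℕ), f) = M := by simp [mnorm, hfsum]
        have hne := hgen (0, f) (le_of_eq hnorm)
        have hne' : ∑ k, (f k : ℝ) * lam k ≠ mass := by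
          intro h
          apply hne
          rw [hdot, h]
          ring
        have hgt : mass < ∑ k, (f k : ℝ) * lam k := lt_of_le_of_ne hge (Ne.symm hne')
        have : |mdot lam ((0 : Fin N → ℕ), f)| = ∑ k, (f k : ℝ) * lam k := by
          rw [hdot, abs_neg, abs_of_pos (lt_trans hmass hgt)]
        simpa [Rset, this] using hgt
      · constructor
        · intro k; simpa using le_trans (hfle k) (Nat.le_add_left _ _)
        · have : mnorm ((0 : Fin N → ℕ), f) = M := by simp [mnorm, hfsum]
          omega
  obtain ⟨r0, hr0R, hr0p⟩ := key
  obtain ⟨r, hr, hcase⟩ := exists_rmin_le lam mass r0 hr0R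
  apply hm
  right
  rcases hcase with rfl | hpr
  · exact ⟨r, hr, hr0p⟩
  · exact ⟨r, hr, prec_trans' hpr hr0p⟩

/-- If 𝐦 ∈ Λⱼ, then 𝐦 = e^j + 𝐧 for some 𝐧 ∈ 𝐍𝐑 with 𝐧·λ = 0. -/
theorem mem_Lambda_decomp {N : ℕ} (hN : 0 < N) (lam : Fin N → ℝ) (mass : ℝ)
    (hmass : 0 < mass)
    (hpos : ∀ j, 0 < lam j)
    (hmono : StrictMono lam)
    (hlt : ∀ j, lam j < mass)
    (M : ℕ)
    (hM1 : ((M : ℝ) - 1) * lam ⟨0, hN⟩ < mass)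
    (hM2 : mass ≤ (M : ℝ) * lam ⟨0, hN⟩)
    (hgen : ∀ m : (Fin N → ℕ) × (Fin N → ℕ), mnorm m ≤ M → (mdot lam m) ^ 2 ≠ mass ^ 2)
    (hgen2 : ∀ m : (Fin N → ℕ) × (Fin N → ℕ),
      mnorm m ≤ 2 * M → mdot lam m = 0 → m.1 = m.2)
    (j : Fin N) (m : (Fin N → ℕ) × (Fin N → ℕ))
    (hmNR : m ∈ NRset lam mass) (hmdot : mdot lam m = lam j) :
    ∃ n : (Fin N → ℕ) × (Fin N → ℕ), n ∈ NRset lam mass ∧ mdot lam n = 0 ∧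
      m.1 = (eIdx j).1 + n.1 ∧ m.2 = n.2 := by

  have hb : mnorm m < 2 * M :=
    nr_bound hN lam mass hmass hpos hmono M hM2 hgen m hmNR
  set p : (Fin N → ℕ) × (Fin N → ℕ) :=
    (m.1, fun k => m.2 k + if k = j then 1 else 0) with hp
  have hitesum : (∑ k, if k = j then (1:ℕ) else 0) = 1 := by
    simp
  have hpnorm : mnorm p = mnorm m + 1 := by
    simp only [mnorm, hp]
    rw [show (∑ k, (m.1 k + (m.2 k + if k = j then 1 else 0)))
        = ∑ k, ((m.1 k + m.2 k) + if k = j then 1 else 0) from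
      Finset.sum_congr rfl (fun k _ => by ring)]
    rw [Finset.sum_add_distrib, hitesum]
  have hsum1 : ∑ k, (if k = j then (1:ℝ) else 0) * lam k = lam j := by
    simp
  have hpdot : mdot lam p = 0 := by
    have : mdot lam p = mdot lam m - lam j := by
      simp only [mdot, hp]
      rw [← hsum1, ← Finset.sum_sub_distrib]
      apply Finset.sum_congr rfl
      intro k _
      push_cast
      by_cases hk : k = j <;> simp [hk] <;> ring
    rw [this, hmdot, sub_self]
  have hP : p.1 = p.2 := hgen2 p (by omega) hpdot
  have heq : ∀ k, m.1 k = m.2 k + (if k = j then 1 else 0) := fun k => congrFun hP k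
  refine ⟨(m.2, m.2), ?_, ?_, ?_, rfl⟩
  · -- (m.2, m.2) ∈ NRset
    intro hcon
    have hdot0 : mdot lam (m.2, m.2) = 0 := by simp [mdot]
    rcases hcon with hcon | hcon
    · have := hcon.1
      simp only [Rset, Set.mem_setOf_eq, hdot0, abs_zero] at this
      linarith
    · obtain ⟨r, hr, hprec⟩ := hcon
      apply hmNR
      right
      refine ⟨r, hr, ?_, ?_⟩
      · intro k
        refine le_trans (hprec.1 k) ?_
        have := heq k
        simp only
        omega
      · refine lt_trans hprec.2 ?_
        have : mnorm m = mnorm (m.2, m.2) + 1 := by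
          simp only [mnorm]
          rw [show (∑ k, (m.1 k + m.2 k))
              = ∑ k, ((m.2 k + m.2 k) + if k = j then 1 else 0) from
            Finset.sum_congr rfl (fun k _ => by rw [heq k]; ring)]
          rw [Finset.sum_add_distrib, hitesum]
        omega
  · simp [mdot]
  · funext k
    have := heq k
    simp only [eIdx, Pi.add_apply]
    omega
end

section
/- Let U : ℝ → ℝ be measurable with U ≥ 0, U ∈ L¹(ℝ), and ∫_ℝ U > 0. Then there exists a constant C_U > 0 such that for every continuously differentiable f : ℝ → ℝ with f' ∈ L²(ℝ) and every measurable W : ℝ → ℝ with W ≥ 0 and x ↦ (1+|x|)W(x) ∈ L¹(ℝ), one has ∫_ℝ W(x) f(x)² dx ≤ C_U·( ‖(1+|x|)W‖_{L¹(ℝ)}·‖f'‖²_{L²(ℝ)} + ‖W‖_{L¹(ℝ)}·∫_ℝ U(x) f(x)² dx ). -/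
open MeasureTheory

/-- Cauchy–Schwarz on an interval for a continuous function. -/
lemma cs_interval {g : ℝ → ℝ} (hg : Continuous g) {a b : ℝ} (hab : a ≤ b) :
    (∫ t in a..b, g t) ^ 2 ≤ (b - a) * ∫ t in a..b, g t ^ 2 := by
  set A := ∫ t in a..b, |g t| with hAdef
  set B := ∫ t in a..b, g t ^ 2 with hBdef
  have hA : |∫ t in a..b, g t| ≤ A := intervalIntegral.abs_integral_le_integral_abs hab
  have hA0 : 0 ≤ A := intervalIntegral.integral_nonneg hab (fun x _ => abs_nonneg _)
  have hB0 : 0 ≤ B := intervalIntegral.integral_nonneg hab (fun x _ => sq_nonneg _)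
  have hL0 : 0 ≤ b - a := sub_nonneg.2 hab
  have key : ∀ l : ℝ, 0 < l → A ≤ (b - a) * (l / 2) + B / (2 * l) := by
    intro l hl
    have mono : A ≤ ∫ t in a..b, (l / 2 + g t ^ 2 / (2 * l)) := by
      apply intervalIntegral.integral_mono_on hab
      · exact (hg.abs).intervalIntegrable _ _
      · exact ((continuous_const.add ((hg.pow 2).div_const _))).intervalIntegrable _ _
      · intro x _
        have h : 0 ≤ l ^ 2 + g x ^ 2 - 2 * l * |g x| := by
          nlinarith [sq_nonneg (|g x| - l), sq_abs (g x)]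
        have heq : l / 2 + g x ^ 2 / (2 * l) - |g x|
            = (l ^ 2 + g x ^ 2 - 2 * l * |g x|) / (2 * l) := by
          field_simp
        rw [← sub_nonneg, heq]
        exact div_nonneg h (by positivity)
    calc A ≤ ∫ t in a..b, (l / 2 + g t ^ 2 / (2 * l)) := mono
      _ = (b - a) * (l / 2) + B / (2 * l) := by
          rw [intervalIntegral.integral_add (intervalIntegrable_const)
            ((by fun_prop : Continuous fun t => g t ^ 2 / (2 * l)).intervalIntegrable _ _),
            intervalIntegral.integral_const, intervalIntegral.integral_div]
          simp [hBdef, smul_eq_mul]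
  have hsq : (∫ t in a..b, g t) ^ 2 ≤ A ^ 2 := by
    rw [← sq_abs (∫ t in a..b, g t)]
    exact pow_le_pow_left₀ (abs_nonneg _) hA 2
  refine hsq.trans ?_
  rcases eq_or_lt_of_le hL0 with hL | hL
  · have : a = b := by linarith
    subst this
    simp [hAdef, intervalIntegral.integral_same]
  rcases eq_or_lt_of_le hB0 with hB | hB
  · have hA0' : A ≤ 0 := by
      by_contra h
      push_neg at h
      have hk := key (A / (b - a)) (by positivity)
      rw [← hB] at hk
      have hne : b - a ≠ 0 := ne_of_gt hL
      have heq : (b - a) * (A / (b - a) / 2) + 0 / (2 * (A / (b - a))) = A / 2 := by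
        field_simp; ring
      rw [heq] at hk
      linarith
    have : A = 0 := le_antisymm hA0' hA0
    rw [this]
    nlinarith
  · set l := Real.sqrt (B / (b - a)) with hldef
    have hlpos : 0 < l := Real.sqrt_pos.2 (by positivity)
    have hl2 : l ^ 2 = B / (b - a) := Real.sq_sqrt (by positivity)
    have hLl2 : (b - a) * l ^ 2 = B := by
      rw [hl2]; field_simp
    have h1 : A ≤ B / l := by
      have hk := key l hlpos
      have heq : (b - a) * (l / 2) + B / (2 * l) = B / l := by
        field_simp
        nlinarith
      linarith [heq ▸ hk]
    have h2 : (B / l) ^ 2 = (b - a) * B := by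
      rw [div_pow]
      rw [eq_comm, eq_div_iff (by positivity)]
      nlinarith
    nlinarith [sq_nonneg (B / l)]

/-- FTC + Cauchy–Schwarz: square of an increment is controlled by the
    distance times the global L² norm of the derivative. -/
lemma sq_sub_le {f : ℝ → ℝ} (hf : ContDiff ℝ 1 f)
    (hg : Integrable (fun x => deriv f x ^ 2)) (x y : ℝ) :
    (f x - f y) ^ 2 ≤ |x - y| * ∫ t, deriv f t ^ 2 := by
  have gcont : Continuous (deriv f) := hf.continuous_deriv le_rfl
  suffices h : ∀ u v : ℝ, u ≤ v → (f v - f u) ^ 2 ≤ |v - u| * ∫ t, deriv f t ^ 2 by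
    rcases le_total y x with hyx | hxy
    · exact h y x hyx
    · have h' := h x y hxy
      have e1 : (f x - f y) ^ 2 = (f y - f x) ^ 2 := by ring
      rw [e1, abs_sub_comm]
      exact h'
  intro u v huv
  have hftc : ∫ t in u..v, deriv f t = f v - f u :=
    intervalIntegral.integral_deriv_eq_sub
      (fun t _ => (hf.differentiable one_ne_zero).differentiableAt)
      (gcont.intervalIntegrable _ _)
  have hcs := cs_interval gcont huv
  have hsub : ∫ t in u..v, deriv f t ^ 2 ≤ ∫ t, deriv f t ^ 2 := by
    rw [intervalIntegral.integral_of_le huv]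
    exact setIntegral_le_integral hg (Filter.Eventually.of_forall fun t => sq_nonneg _)
  rw [← hftc]
  calc (∫ t in u..v, deriv f t) ^ 2 ≤ (v - u) * ∫ t in u..v, deriv f t ^ 2 := hcs
    _ ≤ (v - u) * ∫ t, deriv f t ^ 2 :=
        mul_le_mul_of_nonneg_left hsub (by linarith)
    _ = |v - u| * ∫ t, deriv f t ^ 2 := by rw [abs_of_nonneg (by linarith)]

/-- Weighted Poincaré-type inequality: for a fixed nonzero nonnegative
    U ∈ L¹, there is C_U > 0 such that for all f with f' ∈ L² and all
    nonnegative W with (1+|x|)W ∈ L¹,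
    ∫ W f² ≤ C_U·(‖(1+|x|)W‖_{L¹}·‖f'‖²_{L²} + ‖W‖_{L¹}·∫ U f²). -/
theorem weighted_poincare_with_potential
    (U : ℝ → ℝ) (hUmeas : Measurable U) (hU0 : ∀ x, 0 ≤ U x)
    (hUint : Integrable U) (hUpos : 0 < ∫ x, U x) :
    ∃ C > 0, ∀ f W : ℝ → ℝ, ContDiff ℝ 1 f →
      Integrable (fun x => (deriv f x) ^ 2) →
      Measurable W → (∀ x, 0 ≤ W x) →
      Integrable (fun x => (1 + |x|) * W x) →
      (∫⁻ x, ENNReal.ofReal (W x * f x ^ 2)) ≤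
        ENNReal.ofReal C *
          ((∫⁻ x, ENNReal.ofReal ((1 + |x|) * W x)) *
              (∫⁻ x, ENNReal.ofReal ((deriv f x) ^ 2)) +
            (∫⁻ x, ENNReal.ofReal (W x)) *
              (∫⁻ x, ENNReal.ofReal (U x * f x ^ 2))) := by
  -- Choose a cutoff n with positive mass of U on [-n, n]
  have htend := MeasureTheory.intervalIntegral_tendsto_integral (μ := volume) hUint
    (Filter.tendsto_neg_atTop_atBot.comp (tendsto_natCast_atTop_atTop (R := ℝ)))
    (tendsto_natCast_atTop_atTop (R := ℝ))
  have hev : ∀ᶠ m : ℕ in Filter.atTop,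
      (∫ x, U x) / 2 < ∫ x in (-(m:ℝ))..(m:ℝ), U x :=
    htend.eventually (eventually_gt_nhds (half_lt_self hUpos))
  obtain ⟨n, hn1, hμhalf⟩ := ((Filter.eventually_ge_atTop 1).and hev).exists
  set μR := ∫ x in (-(n:ℝ))..(n:ℝ), U x with hμRdef
  have hμpos : 0 < μR := lt_trans (half_pos hUpos) hμhalf
  have hn1' : (1:ℝ) ≤ (n:ℝ) := by exact_mod_cast hn1
  have hnn : -(n:ℝ) ≤ (n:ℝ) := by linarith
  refine ⟨2 / μR + 2 * (n:ℝ), by positivity, ?_⟩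
  intro f W hf hg' hWmeas hW0 hWint
  have hfm : Measurable f := hf.continuous.measurable
  have hUf2meas : Measurable fun x => U x * f x ^ 2 :=
    hUmeas.mul ((hfm.pow_const 2))
  have hC0 : (0:ℝ) < 2 / μR + 2 * (n:ℝ) := by positivity
  by_cases hfin : (∫⁻ x, ENNReal.ofReal (U x * f x ^ 2)) = ⊤
  · by_cases hW : (∫⁻ x, ENNReal.ofReal (W x)) = 0
    · have hWae : (fun x => ENNReal.ofReal (W x)) =ᵐ[volume] 0 :=
        (lintegral_eq_zero_iff (ENNReal.measurable_ofReal.comp hWmeas)).1 hW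
      have hz : (fun x => ENNReal.ofReal (W x * f x ^ 2)) =ᵐ[volume] 0 := by
        filter_upwards [hWae] with x hx
        have hx0 : W x = 0 := le_antisymm
          (by simpa [ENNReal.ofReal_eq_zero] using hx) (hW0 x)
        simp [hx0]
      rw [lintegral_congr_ae hz]
      simp
    · have hCne : ENNReal.ofReal (2 / μR + 2 * (n:ℝ)) ≠ 0 := by
        simp only [ne_eq, ENNReal.ofReal_eq_zero, not_le]
        exact hC0
      rw [hfin, ENNReal.mul_top hW, add_top, ENNReal.mul_top hCne]
      exact le_top
  -- Main case: U f² is integrable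
  have hUf2 : Integrable (fun x => U x * f x ^ 2) := by
    refine ⟨hUf2meas.aestronglyMeasurable, ?_⟩
    rw [hasFiniteIntegral_iff_ofReal
      (Filter.Eventually.of_forall fun x => mul_nonneg (hU0 x) (sq_nonneg _))]
    exact lt_top_iff_ne_top.2 hfin
  set G := ∫ t, deriv f t ^ 2 with hGdef
  set Ef := ∫ x, U x * f x ^ 2 with hEdef
  have hG0 : 0 ≤ G := integral_nonneg fun t => sq_nonneg _
  have hE0 : 0 ≤ Ef := integral_nonneg fun x => mul_nonneg (hU0 x) (sq_nonneg _)
  -- Pointwise bound on f²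
  have key : ∀ x : ℝ, f x ^ 2 ≤ 2 / μR * Ef + 2 * (n:ℝ) * ((1 + |x|) * G) := by
    intro x
    have hpt : ∀ y ∈ Set.Icc (-(n:ℝ)) (n:ℝ),
        U y * f x ^ 2 ≤ 2 * (U y * f y ^ 2) + (2 * (|x| + n) * G) * U y := by
      intro y hy
      have hsub := sq_sub_le hf hg' x y
      have hyabs : |y| ≤ (n:ℝ) := abs_le.2 ⟨hy.1, hy.2⟩
      have hxy : |x - y| ≤ |x| + n := by
        calc |x - y| ≤ |x| + |y| := by
              rw [sub_eq_add_neg]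
              exact (abs_add_le _ _).trans (by rw [abs_neg])
          _ ≤ |x| + n := by linarith
      have h2 : (f x - f y) ^ 2 ≤ (|x| + n) * G :=
        hsub.trans (mul_le_mul_of_nonneg_right hxy hG0)
      have hf2 : f x ^ 2 ≤ 2 * f y ^ 2 + 2 * ((|x| + n) * G) := by
        nlinarith [sq_nonneg (f x - 2 * f y)]
      nlinarith [mul_le_mul_of_nonneg_left hf2 (hU0 y)]
    have hInt1 : IntervalIntegrable (fun y => U y * f x ^ 2) volume (-(n:ℝ)) n :=
      (hUint.intervalIntegrable).mul_const _
    have hInt2 : IntervalIntegrable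
        (fun y => 2 * (U y * f y ^ 2) + (2 * (|x| + n) * G) * U y) volume (-(n:ℝ)) n :=
      ((hUf2.intervalIntegrable).const_mul _).add ((hUint.intervalIntegrable).const_mul _)
    have hmono := intervalIntegral.integral_mono_on hnn hInt1 hInt2 hpt
    rw [intervalIntegral.integral_mul_const,
      intervalIntegral.integral_add ((hUf2.intervalIntegrable).const_mul _)
        ((hUint.intervalIntegrable).const_mul _),
      intervalIntegral.integral_const_mul, intervalIntegral.integral_const_mul] at hmono
    have hEle : ∫ y in (-(n:ℝ))..(n:ℝ), U y * f y ^ 2 ≤ Ef := by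
      rw [intervalIntegral.integral_of_le hnn]
      exact setIntegral_le_integral hUf2
        (Filter.Eventually.of_forall fun y => mul_nonneg (hU0 y) (sq_nonneg _))
    -- hmono : μR * f x ^ 2 ≤ 2 * ∫ + 2(|x|+n) G μR (modulo orientation)
    have hstep : μR * f x ^ 2 ≤ 2 * Ef + 2 * ((n:ℝ) * (1 + |x|)) * G * μR := by
      have hxn : |x| + (n:ℝ) ≤ (n:ℝ) * (1 + |x|) := by
        nlinarith [abs_nonneg x]
      nlinarith [mul_le_mul_of_nonneg_right hxn (mul_nonneg hG0 (le_of_lt hμpos))]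
    have heq : μR * (2 / μR * Ef + 2 * (n:ℝ) * ((1 + |x|) * G))
        = 2 * Ef + 2 * ((n:ℝ) * (1 + |x|)) * G * μR := by
      have hne : μR ≠ 0 := ne_of_gt hμpos
      calc μR * (2 / μR * Ef + 2 * (n:ℝ) * ((1 + |x|) * G))
          = (2 / μR * μR) * Ef + 2 * ((n:ℝ) * (1 + |x|)) * G * μR := by ring
        _ = 2 * Ef + 2 * ((n:ℝ) * (1 + |x|)) * G * μR := by
            rw [div_mul_cancel₀ _ hne]
    have h2 : μR * f x ^ 2 ≤ μR * (2 / μR * Ef + 2 * (n:ℝ) * ((1 + |x|) * G)) := by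
      rw [heq]; exact hstep
    exact le_of_mul_le_mul_left h2 hμpos
  -- Pointwise bound on W f²
  have hC : ∀ x : ℝ, W x * f x ^ 2 ≤
      (2 / μR * Ef) * W x + (2 * (n:ℝ) * G) * ((1 + |x|) * W x) := by
    intro x
    have h := mul_le_mul_of_nonneg_left (key x) (hW0 x)
    nlinarith [h]
  have habs : Measurable fun x : ℝ => (1 + |x|) * W x :=
    ((continuous_const.add continuous_abs).measurable).mul hWmeas
  calc (∫⁻ x, ENNReal.ofReal (W x * f x ^ 2))
      ≤ ∫⁻ x, (ENNReal.ofReal ((2 / μR * Ef) * W x)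
          + ENNReal.ofReal ((2 * (n:ℝ) * G) * ((1 + |x|) * W x))) := by
        apply lintegral_mono
        intro x
        dsimp only
        rw [← ENNReal.ofReal_add
          (mul_nonneg (by positivity) (hW0 x))
          (mul_nonneg (by positivity)
            (mul_nonneg (by positivity) (hW0 x)))]
        exact ENNReal.ofReal_le_ofReal (hC x)
    _ = ENNReal.ofReal (2 / μR * Ef) * (∫⁻ x, ENNReal.ofReal (W x))
        + ENNReal.ofReal (2 * (n:ℝ) * G) * (∫⁻ x, ENNReal.ofReal ((1 + |x|) * W x)) := by
        rw [lintegral_add_left (hWmeas.const_mul (2 / μR * Ef)).ennreal_ofReal]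
        congr 1
        · rw [← lintegral_const_mul _ hWmeas.ennreal_ofReal]
          apply lintegral_congr
          intro x
          rw [ENNReal.ofReal_mul (by positivity)]
        · rw [← lintegral_const_mul _ habs.ennreal_ofReal]
          apply lintegral_congr
          intro x
          rw [ENNReal.ofReal_mul (by positivity)]
    _ = ENNReal.ofReal (2 / μR) * ((∫⁻ x, ENNReal.ofReal (W x))
            * (∫⁻ x, ENNReal.ofReal (U x * f x ^ 2)))
        + ENNReal.ofReal (2 * (n:ℝ)) * ((∫⁻ x, ENNReal.ofReal ((1 + |x|) * W x))
            * (∫⁻ x, ENNReal.ofReal ((deriv f x) ^ 2))) := by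
        rw [ENNReal.ofReal_mul (by positivity : (0:ℝ) ≤ 2 / μR),
          ENNReal.ofReal_mul (by positivity : (0:ℝ) ≤ 2 * (n:ℝ)),
          hEdef, hGdef,
          ofReal_integral_eq_lintegral_ofReal hUf2
            (Filter.Eventually.of_forall fun x => mul_nonneg (hU0 x) (sq_nonneg _)),
          ofReal_integral_eq_lintegral_ofReal hg'
            (Filter.Eventually.of_forall fun x => sq_nonneg _)]
        ring
    _ ≤ ENNReal.ofReal (2 / μR + 2 * (n:ℝ)) *
          ((∫⁻ x, ENNReal.ofReal ((1 + |x|) * W x))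
              * (∫⁻ x, ENNReal.ofReal ((deriv f x) ^ 2)) +
            (∫⁻ x, ENNReal.ofReal (W x))
              * (∫⁻ x, ENNReal.ofReal (U x * f x ^ 2))) := by
        rw [mul_add]
        rw [add_comm (ENNReal.ofReal (2 / μR + 2 * (n:ℝ)) * _)]
        have ha : 2 / μR ≤ 2 / μR + 2 * (n:ℝ) := by linarith
        have hb : 2 * (n:ℝ) ≤ 2 / μR + 2 * (n:ℝ) := by
          have h0 : 0 < 2 / μR := by positivity
          linarith
        exact add_le_add
          (mul_le_mul' (ENNReal.ofReal_le_ofReal ha) le_rfl)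
          (mul_le_mul' (ENNReal.ofReal_le_ofReal hb) le_rfl)
end

section
/- For every κ > 0 there exists a constant C > 0, depending only on κ, such that for every A ≥ 1 and every continuously differentiable f : ℝ → ℝ with f' ∈ L²(ℝ), one has ∫_ℝ sech(2x/A)² f(x)² dx ≤ C·( A²·‖f'‖²_{L²(ℝ)} + A·∫_ℝ sech(κx)² f(x)² dx ). -/
open MeasureTheory Set Real

lemma cs_aux {g : ℝ → ℝ} (hc : Continuous g) (hint : Integrable (fun t => g t ^ 2))
    (y x : ℝ) : (∫ t in y..x, g t) ^ 2 ≤ |x - y| * ∫ t, g t ^ 2 := by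
  set s : Set ℝ := Set.uIoc y x with hs
  have hvol : volume s = ENNReal.ofReal |x - y| := by
    rw [hs, Set.uIoc, Real.volume_Ioc, max_sub_min_eq_abs, abs_sub_comm]
  haveI : IsFiniteMeasure (volume.restrict s) := by
    constructor
    rw [Measure.restrict_apply_univ, hvol]
    exact ENNReal.ofReal_lt_top
  have h1 : |∫ t in y..x, g t| ≤ ∫ t in s, |g t| := by
    simpa [Real.norm_eq_abs] using
      intervalIntegral.norm_integral_le_integral_norm_uIoc (f := g) (a := y) (b := x) (μ := volume)
  have hconj : (2:ℝ).HolderConjugate 2 := ⟨by norm_num, by norm_num, by norm_num⟩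
  have hg2 : IntegrableOn (fun t => g t ^ 2) s := hint.integrableOn
  have h2ofReal : ENNReal.ofReal (2:ℝ) = 2 := by norm_num
  have hmem1 : MemLp (fun t => |g t|) (ENNReal.ofReal 2) (volume.restrict s) := by
    rw [h2ofReal]
    refine (memLp_two_iff_integrable_sq (hc.abs.aestronglyMeasurable)).2 ?_
    exact hg2.congr (Filter.Eventually.of_forall fun t => (sq_abs (g t)).symm)
  have hmem2 : MemLp (fun _ : ℝ => (1:ℝ)) (ENNReal.ofReal 2) (volume.restrict s) := by
    rw [h2ofReal]; exact memLp_const 1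
  have holder := integral_mul_le_Lp_mul_Lq_of_nonneg hconj
    (Filter.Eventually.of_forall fun t => abs_nonneg (g t))
    (Filter.Eventually.of_forall fun _ => zero_le_one) hmem1 hmem2
  have hrpow : ∀ a : ℝ, 0 ≤ a → a ^ (2:ℝ) = a ^ 2 := fun a _ => by
    rw [show (2:ℝ) = ((2:ℕ):ℝ) by norm_num, Real.rpow_natCast]
  set a : ℝ := ∫ t in s, g t ^ 2 with ha
  have ha0 : 0 ≤ a := setIntegral_nonneg (by measurability) fun t _ => sq_nonneg _
  have hb0 : (0:ℝ) ≤ |x - y| := abs_nonneg _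
  have key : ∫ t in s, |g t| ≤ Real.sqrt (a * |x - y|) := by
    have e1 : ∫ t in s, |g t| * 1 = ∫ t in s, |g t| := by simp
    have e2 : ∫ t in s, |g t| ^ (2:ℝ) = a := by
      rw [ha]
      refine integral_congr_ae (Filter.Eventually.of_forall fun t => ?_)
      show |g t| ^ (2:ℝ) = g t ^ 2
      rw [hrpow _ (abs_nonneg _), sq_abs]
    have e3 : ∫ t in s, (1:ℝ) ^ (2:ℝ) = |x - y| := by
      simp only [Real.one_rpow]
      rw [setIntegral_const, smul_eq_mul, mul_one, measureReal_def, hvol, ENNReal.toReal_ofReal hb0]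
    calc ∫ t in s, |g t| = ∫ t in s, |g t| * 1 := e1.symm
      _ ≤ (∫ t in s, |g t| ^ (2:ℝ)) ^ (1/2:ℝ) * (∫ t in s, (1:ℝ) ^ (2:ℝ)) ^ (1/2:ℝ) := holder
      _ = Real.sqrt (a * |x - y|) := by
          rw [e2, e3, ← Real.sqrt_eq_rpow, ← Real.sqrt_eq_rpow, ← Real.sqrt_mul ha0]
  have habs : |∫ t in y..x, g t| ≤ Real.sqrt (a * |x - y|) := h1.trans key
  have hsq : (∫ t in y..x, g t) ^ 2 ≤ a * |x - y| := by
    have := pow_le_pow_left₀ (abs_nonneg _) habs 2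
    rwa [sq_abs, Real.sq_sqrt (mul_nonneg ha0 hb0)] at this
  have haD : a ≤ ∫ t, g t ^ 2 :=
    setIntegral_le_integral hint (Filter.Eventually.of_forall fun t => sq_nonneg _)
  calc (∫ t in y..x, g t) ^ 2 ≤ a * |x - y| := hsq
    _ ≤ (∫ t, g t ^ 2) * |x - y| := mul_le_mul_of_nonneg_right haD hb0
    _ = |x - y| * ∫ t, g t ^ 2 := mul_comm _ _

lemma exp_abs_integrable : Integrable (fun x : ℝ => Real.exp (-|x|)) := by
  have hIoi : IntegrableOn (fun x : ℝ => Real.exp (-|x|)) (Set.Ioi 0) := by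
    refine ((exp_neg_integrableOn_Ioi 0 zero_lt_one).congr_fun ?_ measurableSet_Ioi)
    intro t ht
    simp [abs_of_pos (mem_Ioi.mp ht)]
  have hIci : IntegrableOn (fun x : ℝ => Real.exp (-|x|)) (Set.Ici 0) :=
    Iff.mpr integrableOn_Ici_iff_integrableOn_Ioi hIoi
  have hIic : IntegrableOn (fun x : ℝ => Real.exp (-|x|)) (Set.Iic 0) := by
    rw [← Measure.map_neg_eq_self (volume : Measure ℝ)]
    have m : MeasurableEmbedding fun x : ℝ => -x := (Homeomorph.neg ℝ).measurableEmbedding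
    rw [m.integrableOn_map_iff]
    simp_rw [Function.comp_def, abs_neg, neg_preimage, neg_Iic, neg_zero]
    exact hIci
  have := hIic.union hIoi
  rwa [Set.Iic_union_Ioi, integrableOn_univ] at this

lemma lint_exp (A : ℝ) (hA : 0 < A) :
    (∫⁻ x : ℝ, ENNReal.ofReal (Real.exp (-(|x|/A)))) = ENNReal.ofReal (2*A) := by
  have hfun : (fun x : ℝ => Real.exp (-(|x|/A))) = fun x : ℝ => Real.exp (-|x / A|) := by
    funext x; rw [abs_div, abs_of_pos hA]
  have hint : Integrable (fun x : ℝ => Real.exp (-(|x|/A))) := by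
    rw [hfun]; exact exp_abs_integrable.comp_div hA.ne'
  rw [← MeasureTheory.ofReal_integral_eq_lintegral_ofReal hint
    (Filter.Eventually.of_forall fun x => (Real.exp_pos _).le)]
  congr 1
  calc ∫ x, Real.exp (-(|x|/A)) = ∫ x, (fun u : ℝ => Real.exp (-|u|)) (x / A) := by
        rw [hfun]
    _ = |A| • ∫ u : ℝ, Real.exp (-|u|) := MeasureTheory.Measure.integral_comp_div (fun u : ℝ => Real.exp (-|u|)) A
    _ = 2 * A := by
        rw [integral_comp_abs (f := fun t => Real.exp (-t)), integral_exp_neg_Ioi_zero,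
          abs_of_pos hA, smul_eq_mul]
        ring


/-- For every κ > 0 there is C > 0 such that for all A ≥ 1 and f ∈ C¹ with f' ∈ L²,
    ∫ sech(2x/A)² f² ≤ C·(A²·‖f'‖²_{L²} + A·∫ sech(κx)² f²). -/
theorem sech_weight_comparison (κ : ℝ) (hκ : 0 < κ) :
    ∃ C > 0, ∀ A : ℝ, 1 ≤ A → ∀ f : ℝ → ℝ, ContDiff ℝ 1 f →
      Integrable (fun x => (deriv f x) ^ 2) →
      (∫⁻ x, ENNReal.ofReal (((Real.cosh (2 * x / A))⁻¹) ^ 2 * f x ^ 2)) ≤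
        ENNReal.ofReal C *
          (ENNReal.ofReal (A ^ 2) * (∫⁻ x, ENNReal.ofReal ((deriv f x) ^ 2)) +
            ENNReal.ofReal A *
              (∫⁻ x, ENNReal.ofReal (((Real.cosh (κ * x))⁻¹) ^ 2 * f x ^ 2))) := by
  refine ⟨16 * Real.cosh κ ^ 2, by positivity, ?_⟩
  intro A hA f hf hint
  have hA0 : (0:ℝ) < A := lt_of_lt_of_le one_pos hA
  have hfc : Continuous f := hf.continuous
  have hdc : Continuous (deriv f) := hf.continuous_deriv le_rfl
  set D : ℝ := ∫ t, deriv f t ^ 2 with hDdef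
  have hD0 : 0 ≤ D := integral_nonneg fun t => sq_nonneg _
  set I₀ : ℝ := ∫ y in Icc (0:ℝ) 1, f y ^ 2 with hIdef
  have hI0 : 0 ≤ I₀ := setIntegral_nonneg measurableSet_Icc fun y _ => sq_nonneg _
  have hIccvol : volume (Icc (0:ℝ) 1) = 1 := by
    rw [Real.volume_Icc]; norm_num
  have hf2Icc : IntegrableOn (fun y => f y ^ 2) (Icc (0:ℝ) 1) :=
    (hfc.pow 2).integrableOn_Icc
  -- pointwise key bound
  have key : ∀ x : ℝ, f x ^ 2 ≤ 2 * I₀ + 2 * (|x| + 1) * D := by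
    intro x
    have hyb : ∀ y ∈ Icc (0:ℝ) 1, f x ^ 2 ≤ 2 * f y ^ 2 + 2 * (|x| + 1) * D := by
      intro y hy
      have hFTC : ∫ t in y..x, deriv f t = f x - f y :=
        intervalIntegral.integral_deriv_eq_sub
          (fun t _ => (hf.differentiable one_ne_zero).differentiableAt)
          (hdc.intervalIntegrable y x)
      have hCS : (f x - f y) ^ 2 ≤ |x - y| * D := by
        rw [← hFTC]; exact cs_aux hdc hint y x
      have habs : |x - y| ≤ |x| + 1 := by
        have h1 : |x - y| ≤ |x| + |y| := abs_sub x y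
        have hy1 : |y| ≤ 1 := abs_le.mpr ⟨by linarith [hy.1], hy.2⟩
        linarith
      have h2 : (f x - f y) ^ 2 ≤ (|x| + 1) * D :=
        hCS.trans (mul_le_mul_of_nonneg_right habs hD0)
      nlinarith [sq_nonneg (f y - (f x - f y))]
    have hconst : IntegrableOn (fun _ : ℝ => 2 * (|x| + 1) * D) (Icc (0:ℝ) 1) :=
      integrableOn_const (by rw [hIccvol]; exact ENNReal.one_ne_top)
    have h1 : f x ^ 2 = ∫ _ in Icc (0:ℝ) 1, f x ^ 2 := by
      rw [setIntegral_const, measureReal_def, hIccvol]; simp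
    have h2 : (∫ _ in Icc (0:ℝ) 1, f x ^ 2) ≤
        ∫ y in Icc (0:ℝ) 1, (2 * f y ^ 2 + 2 * (|x| + 1) * D) := by
      refine setIntegral_mono_on
        (integrableOn_const (by rw [hIccvol]; exact ENNReal.one_ne_top))
        ((hf2Icc.const_mul 2).add hconst) measurableSet_Icc hyb
    have h3 : ∫ y in Icc (0:ℝ) 1, (2 * f y ^ 2 + 2 * (|x| + 1) * D)
        = 2 * I₀ + 2 * (|x| + 1) * D := by
      rw [integral_add (hf2Icc.const_mul 2) hconst, integral_const_mul,
        setIntegral_const, measureReal_def, hIccvol]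
      simp [hIdef]
    linarith [h1.le.trans (h2.trans h3.le)]
  -- pointwise exponential bound
  have ptwise : ∀ x : ℝ, ((Real.cosh (2 * x / A))⁻¹) ^ 2 * f x ^ 2 ≤
      (8 * I₀ + 8 * A * D) * Real.exp (-(|x| / A)) := by
    intro x
    set s : ℝ := |x| / A with hsdef
    have hs0 : 0 ≤ s := div_nonneg (abs_nonneg _) hA0.le
    have habs_t : |2 * x / A| = 2 * s := by
      rw [hsdef, abs_div, abs_mul, abs_of_pos hA0, abs_two]
      ring
    have hcosh_ge : Real.exp |2 * x / A| / 2 ≤ Real.cosh (2 * x / A) := by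
      rw [Real.cosh_eq]
      rcases abs_cases (2 * x / A) with ⟨h, _⟩ | ⟨h, _⟩ <;> rw [h] <;>
        nlinarith [Real.exp_pos (2 * x / A), Real.exp_pos (-(2 * x / A))]
    have hcosh_pos : 0 < Real.cosh (2 * x / A) := Real.cosh_pos _
    have hsech : ((Real.cosh (2 * x / A))⁻¹) ^ 2 ≤ 4 * Real.exp (-(4 * s)) := by
      have hinv : (Real.cosh (2 * x / A))⁻¹ ≤ 2 * Real.exp (-(2 * s)) := by
        have he : 0 < Real.exp |2 * x / A| / 2 := by positivity
        have := inv_anti₀ he hcosh_ge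
        rwa [show (Real.exp |2 * x / A| / 2)⁻¹ = 2 * Real.exp (-(2 * s)) by
          rw [habs_t, Real.exp_neg]
          field_simp] at this
      calc ((Real.cosh (2 * x / A))⁻¹) ^ 2 ≤ (2 * Real.exp (-(2 * s))) ^ 2 :=
            pow_le_pow_left₀ (inv_nonneg.mpr hcosh_pos.le) hinv 2
        _ = 4 * Real.exp (-(4 * s)) := by
            have harg : (-(2 * s)) + (-(2 * s)) = -(4 * s) := by ring
            rw [mul_pow, pow_two (Real.exp (-(2 * s))), ← Real.exp_add, harg]
            norm_num
    have h1 : ((Real.cosh (2 * x / A))⁻¹) ^ 2 * f x ^ 2 ≤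
        4 * Real.exp (-(4 * s)) * (2 * I₀ + 2 * (|x| + 1) * D) := by
      refine mul_le_mul hsech (key x) (sq_nonneg _) (by positivity)
    have he4E : Real.exp (-(4 * s)) ≤ Real.exp (-s) :=
      Real.exp_le_exp.mpr (by linarith)
    have hxe : (|x| + 1) * Real.exp (-(4 * s)) ≤ A * Real.exp (-s) := by
      have hx1 : |x| + 1 ≤ A * (s + 1) := by
        have : |x| = A * s := by rw [hsdef]; field_simp
        nlinarith
      have hsexp : s + 1 ≤ Real.exp s := by
        have := Real.add_one_le_exp s; linarith
      calc (|x| + 1) * Real.exp (-(4 * s)) ≤ A * (s + 1) * Real.exp (-(4 * s)) :=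
            mul_le_mul_of_nonneg_right hx1 (Real.exp_pos _).le
        _ ≤ A * Real.exp s * Real.exp (-(4 * s)) := by
            refine mul_le_mul_of_nonneg_right ?_ (Real.exp_pos _).le
            exact mul_le_mul_of_nonneg_left hsexp hA0.le
        _ = A * Real.exp (-(3 * s)) := by
            have harg : s + (-(4 * s)) = -(3 * s) := by ring
            rw [mul_assoc, ← Real.exp_add, harg]
        _ ≤ A * Real.exp (-s) := by
            refine mul_le_mul_of_nonneg_left (Real.exp_le_exp.mpr (by linarith)) hA0.le
    have hE : Real.exp (-(|x| / A)) = Real.exp (-s) := by rw [hsdef]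
    rw [hE]
    nlinarith [mul_le_mul_of_nonneg_left he4E (by positivity : (0:ℝ) ≤ 8 * I₀),
      mul_le_mul_of_nonneg_left hxe (by positivity : (0:ℝ) ≤ 8 * D),
      (Real.exp_pos (-(4*s))).le, (Real.exp_pos (-s)).le]
  -- lintegral chain
  have h8 : (0:ℝ) ≤ 8 * I₀ + 8 * A * D := by positivity
  have step1 : (∫⁻ x, ENNReal.ofReal (((Real.cosh (2 * x / A))⁻¹) ^ 2 * f x ^ 2)) ≤
      ENNReal.ofReal ((8 * I₀ + 8 * A * D) * (2 * A)) := by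
    calc (∫⁻ x, ENNReal.ofReal (((Real.cosh (2 * x / A))⁻¹) ^ 2 * f x ^ 2))
        ≤ ∫⁻ x, ENNReal.ofReal (8 * I₀ + 8 * A * D) * ENNReal.ofReal (Real.exp (-(|x| / A))) := by
          refine lintegral_mono fun x => ?_
          rw [← ENNReal.ofReal_mul h8]
          exact ENNReal.ofReal_le_ofReal (ptwise x)
      _ = ENNReal.ofReal (8 * I₀ + 8 * A * D) * ∫⁻ x, ENNReal.ofReal (Real.exp (-(|x| / A))) :=
          lintegral_const_mul' _ _ ENNReal.ofReal_ne_top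
      _ = ENNReal.ofReal (8 * I₀ + 8 * A * D) * ENNReal.ofReal (2 * A) := by
          rw [lint_exp A hA0]
      _ = ENNReal.ofReal ((8 * I₀ + 8 * A * D) * (2 * A)) := (ENNReal.ofReal_mul h8).symm
  -- lower bounds for the RHS integrals
  have hD_eq : ENNReal.ofReal D = ∫⁻ x, ENNReal.ofReal (deriv f x ^ 2) :=
    ofReal_integral_eq_lintegral_ofReal hint (Filter.Eventually.of_forall fun x => sq_nonneg _)
  set τ : ℝ := (Real.cosh κ)⁻¹ with hτdef
  have hτ0 : 0 < τ := inv_pos.mpr (Real.cosh_pos _)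
  have hI_le : ENNReal.ofReal (τ ^ 2 * I₀) ≤
      ∫⁻ x, ENNReal.ofReal (((Real.cosh (κ * x))⁻¹) ^ 2 * f x ^ 2) := by
    have e1 : τ ^ 2 * I₀ = ∫ y in Icc (0:ℝ) 1, τ ^ 2 * f y ^ 2 := by
      rw [integral_const_mul]
    have e2 : ENNReal.ofReal (τ ^ 2 * I₀) =
        ∫⁻ y in Icc (0:ℝ) 1, ENNReal.ofReal (τ ^ 2 * f y ^ 2) := by
      rw [e1]
      exact ofReal_integral_eq_lintegral_ofReal (hf2Icc.const_mul _)
        (Filter.Eventually.of_forall fun y => by positivity)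
    rw [e2]
    have e3 : (∫⁻ y in Icc (0:ℝ) 1, ENNReal.ofReal (τ ^ 2 * f y ^ 2)) ≤
        ∫⁻ y in Icc (0:ℝ) 1, ENNReal.ofReal (((Real.cosh (κ * y))⁻¹) ^ 2 * f y ^ 2) := by
      refine setLIntegral_mono ?_ fun y hy => ?_
      · exact (((Real.continuous_cosh.comp (continuous_const.mul continuous_id)).inv₀
          (fun y => (Real.cosh_pos _).ne')).pow 2).mul (hfc.pow 2) |>.measurable.ennreal_ofReal
      · refine ENNReal.ofReal_le_ofReal (mul_le_mul_of_nonneg_right ?_ (sq_nonneg _))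
        have hcc : Real.cosh (κ * y) ≤ Real.cosh κ := by
          rw [Real.cosh_le_cosh]
          rw [abs_of_pos hκ, abs_of_nonneg (by nlinarith [hy.1] : (0:ℝ) ≤ κ * y)]
          nlinarith [hy.1, hy.2]
        have : (Real.cosh κ)⁻¹ ≤ (Real.cosh (κ * y))⁻¹ :=
          inv_anti₀ (Real.cosh_pos _) hcc
        exact pow_le_pow_left₀ hτ0.le this 2
    exact e3.trans (setLIntegral_le_lintegral _ _)
  -- finish
  refine step1.trans ?_
  have hrhs : ENNReal.ofReal ((16 * Real.cosh κ ^ 2) * (A ^ 2 * D + A * (τ ^ 2 * I₀))) ≤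
      ENNReal.ofReal (16 * Real.cosh κ ^ 2) *
        (ENNReal.ofReal (A ^ 2) * (∫⁻ x, ENNReal.ofReal (deriv f x ^ 2)) +
          ENNReal.ofReal A *
            (∫⁻ x, ENNReal.ofReal (((Real.cosh (κ * x))⁻¹) ^ 2 * f x ^ 2))) := by
    rw [ENNReal.ofReal_mul (by positivity)]
    refine mul_le_mul_right ?_ _
    rw [ENNReal.ofReal_add (by positivity) (by positivity),
      ENNReal.ofReal_mul (by positivity), ENNReal.ofReal_mul hA0.le]
    refine add_le_add (le_of_eq ?_) (mul_le_mul_right hI_le _)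
    rw [hD_eq]
  refine le_trans ?_ hrhs
  refine ENNReal.ofReal_le_ofReal ?_
  have hch : (1:ℝ) ≤ Real.cosh κ := Real.one_le_cosh κ
  have hττ : Real.cosh κ ^ 2 * τ ^ 2 = 1 := by
    rw [hτdef]
    field_simp
  have hexp : (16 * Real.cosh κ ^ 2) * (A ^ 2 * D + A * (τ ^ 2 * I₀))
      = 16 * Real.cosh κ ^ 2 * A ^ 2 * D + 16 * A * I₀ := by
    calc (16 * Real.cosh κ ^ 2) * (A ^ 2 * D + A * (τ ^ 2 * I₀))
        = 16 * Real.cosh κ ^ 2 * A ^ 2 * D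
            + 16 * (Real.cosh κ ^ 2 * τ ^ 2) * (A * I₀) := by ring
      _ = 16 * Real.cosh κ ^ 2 * A ^ 2 * D + 16 * A * I₀ := by rw [hττ]; ring
  rw [hexp]
  nlinarith [mul_nonneg (mul_nonneg hD0 (sq_nonneg A))
      (by nlinarith [hch] : (0:ℝ) ≤ Real.cosh κ ^ 2 - 1)]
end

section
/- One has the product factorization (A₁ ∘ ⋯ ∘ A_N) ∘ (B_N ∘ ⋯ ∘ B₁) = (L₁ − μ₁·id) ∘ (L₁ − μ₂·id) ∘ ⋯ ∘ (L₁ − μ_N·id). -/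
/-- Composition F_1 ∘ ⋯ ∘ F_n (first index outermost). -/
def compFwd {E : Type*} [AddCommGroup E] [Module ℂ E] :
    (n : ℕ) → (Fin n → (E →ₗ[ℂ] E)) → (E →ₗ[ℂ] E)
  | 0, _ => LinearMap.id
  | n + 1, F => F 0 ∘ₗ compFwd n (fun j => F j.succ)

/-- Composition B_n ∘ ⋯ ∘ B_1 (last index outermost). -/
def compRev {E : Type*} [AddCommGroup E] [Module ℂ E] :
    (n : ℕ) → (Fin n → (E →ₗ[ℂ] E)) → (E →ₗ[ℂ] E)
  | 0, _ => LinearMap.id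
  | n + 1, F => F (Fin.last n) ∘ₗ compRev n (fun j => F j.castSucc)

lemma compRev_succ {E : Type*} [AddCommGroup E] [Module ℂ E] :
    ∀ (n : ℕ) (F : Fin (n + 1) → (E →ₗ[ℂ] E)),
      compRev (n + 1) F = compRev n (fun j => F j.succ) ∘ₗ F 0 := by
  intro n
  induction n with
  | zero => intro F; simp [compRev, Fin.last]
  | succ n ih =>
    intro F
    have h := ih (fun j => F j.castSucc)
    simp only [compRev] at h ⊢
    rw [h]
    simp only [Fin.succ_castSucc, LinearMap.comp_assoc]
    rfl

lemma swap_factor {E : Type*} [AddCommGroup E] [Module ℂ E]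
    (T : E →ₗ[ℂ] E) (a b : ℂ) :
    (T - a • LinearMap.id) ∘ₗ (T - b • LinearMap.id)
      = (T - b • LinearMap.id) ∘ₗ (T - a • LinearMap.id) := by
  simp only [LinearMap.sub_comp, LinearMap.comp_sub, LinearMap.smul_comp,
    LinearMap.comp_smul, LinearMap.id_comp, LinearMap.comp_id, smul_smul,
    smul_sub, mul_comm a b]
  abel

lemma pull_through {E : Type*} [AddCommGroup E] [Module ℂ E]
    (T : E →ₗ[ℂ] E) (d : ℂ) :
    ∀ (n : ℕ) (c : Fin n → ℂ),
      compFwd n (fun j => T - c j • LinearMap.id) ∘ₗ (T - d • LinearMap.id)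
        = (T - d • LinearMap.id) ∘ₗ compFwd n (fun j => T - c j • LinearMap.id) := by
  intro n
  induction n with
  | zero => intro c; simp [compFwd]
  | succ n ih =>
    intro c
    simp only [compFwd]
    rw [LinearMap.comp_assoc, ih (fun j => c j.succ), ← LinearMap.comp_assoc,
      swap_factor, LinearMap.comp_assoc]

lemma intertwine {E : Type*} [AddCommGroup E] [Module ℂ E]
    (S T A : E →ₗ[ℂ] E) (h : A ∘ₗ T = S ∘ₗ A) :
    ∀ (n : ℕ) (c : Fin n → ℂ),
      A ∘ₗ compFwd n (fun j => T - c j • LinearMap.id)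
        = compFwd n (fun j => S - c j • LinearMap.id) ∘ₗ A := by
  have step : ∀ d : ℂ, A ∘ₗ (T - d • LinearMap.id) = (S - d • LinearMap.id) ∘ₗ A := by
    intro d
    simp only [LinearMap.comp_sub, LinearMap.sub_comp, LinearMap.comp_smul,
      LinearMap.smul_comp, LinearMap.id_comp, LinearMap.comp_id, h]
  intro n
  induction n with
  | zero => intro c; simp [compFwd]
  | succ n ih =>
    intro c
    simp only [compFwd]
    rw [← LinearMap.comp_assoc, step, LinearMap.comp_assoc, ih (fun j => c j.succ),
      ← LinearMap.comp_assoc]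

lemma darboux_aux {E : Type*} [AddCommGroup E] [Module ℂ E] :
    ∀ (N : ℕ) (A B : Fin N → (E →ₗ[ℂ] E)) (μ : Fin N → ℂ)
      (L : Fin (N + 1) → (E →ₗ[ℂ] E)),
      (∀ j : Fin N, L j.castSucc = A j ∘ₗ B j + μ j • LinearMap.id) →
      (∀ j : Fin N, L j.succ = B j ∘ₗ A j + μ j • LinearMap.id) →
      compFwd N A ∘ₗ compRev N B =
        compFwd N (fun j => L 0 - μ j • LinearMap.id) := by
  intro N
  induction N with
  | zero => intro A B μ L _ _; simp [compFwd, compRev]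
  | succ N ih =>
    intro A B μ L hL1 hL2
    have hmid := ih (fun j => A j.succ) (fun j => B j.succ) (fun j => μ j.succ)
      (fun j => L j.succ)
      (fun j => by simpa only [Fin.succ_castSucc] using hL1 j.succ)
      (fun j => hL2 j.succ)
    -- intertwining: A 0 ∘ L 1 = L 0 ∘ A 0
    have hint : A 0 ∘ₗ L (Fin.succ 0) = L 0 ∘ₗ A 0 := by
      have h0 : (0 : Fin (N + 1)).castSucc = (0 : Fin (N + 2)) := rfl
      rw [hL2 0, ← h0, hL1 0]
      simp only [LinearMap.comp_add, LinearMap.add_comp, LinearMap.comp_smul,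
        LinearMap.smul_comp, LinearMap.comp_id, LinearMap.id_comp,
        ← LinearMap.comp_assoc]
    have hAB : A 0 ∘ₗ B 0 = L 0 - μ 0 • LinearMap.id := by
      have h0 : (0 : Fin (N + 1)).castSucc = (0 : Fin (N + 2)) := rfl
      rw [← h0, hL1 0]; abel
    calc compFwd (N + 1) A ∘ₗ compRev (N + 1) B
        = A 0 ∘ₗ (compFwd N (fun j => A j.succ) ∘ₗ compRev N (fun j => B j.succ))
            ∘ₗ B 0 := by
          rw [compRev_succ]
          simp only [compFwd, LinearMap.comp_assoc]
      _ = A 0 ∘ₗ compFwd N (fun j => L (Fin.succ 0) - μ j.succ • LinearMap.id)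
            ∘ₗ B 0 := by rw [hmid]
      _ = (compFwd N (fun j => L 0 - μ j.succ • LinearMap.id) ∘ₗ A 0) ∘ₗ B 0 := by
          rw [← LinearMap.comp_assoc,
            intertwine (L 0) (L (Fin.succ 0)) (A 0) hint N (fun j => μ j.succ)]
      _ = compFwd N (fun j => L 0 - μ j.succ • LinearMap.id)
            ∘ₗ (L 0 - μ 0 • LinearMap.id) := by
          rw [LinearMap.comp_assoc, hAB]
      _ = (L 0 - μ 0 • LinearMap.id)
            ∘ₗ compFwd N (fun j => L 0 - μ j.succ • LinearMap.id) := by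
          rw [pull_through]
      _ = compFwd (N + 1) (fun j => L 0 - μ j • LinearMap.id) := by
          simp only [compFwd]

/-- Darboux factorization:
    (A₁ ∘ ⋯ ∘ A_N) ∘ (B_N ∘ ⋯ ∘ B₁) = (L₁ − μ₁) ∘ (L₁ − μ₂) ∘ ⋯ ∘ (L₁ − μ_N). -/
theorem darboux_product_factorization {E : Type*} [AddCommGroup E] [Module ℂ E]
    (N : ℕ) (hN : 1 ≤ N)
    (A B : Fin N → (E →ₗ[ℂ] E)) (μ : Fin N → ℂ)
    (L : Fin (N + 1) → (E →ₗ[ℂ] E))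
    (hL1 : ∀ j : Fin N, L j.castSucc = A j ∘ₗ B j + μ j • LinearMap.id)
    (hL2 : ∀ j : Fin N, L j.succ = B j ∘ₗ A j + μ j • LinearMap.id) :
    compFwd N A ∘ₗ compRev N B =
      compFwd N (fun j => L 0 - μ j • LinearMap.id) := by
  exact darboux_aux N A B μ L hL1 hL2
end
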